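/- Let φ(T,x,v) ∈ int O⁺_{≤T+S}(x) for some T,S > 0 and suppose the control system is locally accessible at φ(T,x,v). Then x ∈ int O⁻_{≤T+2S}(φ(T,x,v)). -/

import Mathlib

open MeasureTheory Set Topology

/-- A control-affine system `ẋ = f₀(x) + ∑ vᵢ(t) fᵢ(x)` on `ℝ^d` with Lipschitz
continuous vector fields and compact control range `V ⊆ ℝ^m`.  The (unique, global)
solutions are bundled as the data `φ` together with their defining properties. -/
structure CAS (d m : ℕ) where
  /-- the drift vector field -/
  f0 : (Fin d → ℝ) → (Fin d → ℝ)
  /-- the control vector fields -/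
  f : Fin m → (Fin d → ℝ) → (Fin d → ℝ)
  /-- the control range -/
  V : Set (Fin m → ℝ)
  lip0 : ∃ K, LipschitzWith K f0
  lip : ∀ i, ∃ K, LipschitzWith K (f i)
  V_compact : IsCompact V
  /-- the solution map: `φ x v t` is the solution at time `t` starting at `x` with control `v` -/
  φ : (Fin d → ℝ) → (ℝ → (Fin m → ℝ)) → ℝ → (Fin d → ℝ)
  φ_init : ∀ x v, φ x v 0 = x
  φ_cont : ∀ x v, Continuous (φ x v)
  /-- solutions are (Carathéodory) solutions of the ODE -/
  φ_sol : ∀ (x : Fin d → ℝ) (v : ℝ → (Fin m → ℝ)), Measurable v → (∀ t, v t ∈ V) →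
    ∀ t, 0 ≤ t →
      φ x v t = x + ∫ s in (0:ℝ)..t, (f0 (φ x v s) + ∑ i, v s i • f (i) (φ x v s))

namespace CAS

variable {d m : ℕ}

/-- the set of admissible controls -/
def ctrl (S : CAS d m) : Set (ℝ → (Fin m → ℝ)) :=
  {v | Measurable v ∧ ∀ t, v t ∈ S.V}

/-- a control is piecewise constant if it has only finitely many discontinuities on
every bounded interval, i.e. it is constant between the members of a sequence of
switching times tending to infinity -/
def PiecewiseConst (v : ℝ → (Fin m → ℝ)) : Prop :=
  ∃ τ : ℕ → ℝ, τ 0 = 0 ∧ StrictMono τ ∧ Filter.Tendsto τ Filter.atTop Filter.atTop ∧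
    ∀ n, ∀ t ∈ Ico (τ n) (τ (n + 1)), v t = v (τ n)

/-- the reachable set from `x` -/
def reach (S : CAS d m) (x : Fin d → ℝ) : Set (Fin d → ℝ) :=
  {y | ∃ v ∈ S.ctrl, ∃ t ≥ (0:ℝ), S.φ x v t = y}

/-- the set reachable from `x` with piecewise constant controls -/
def reachPC (S : CAS d m) (x : Fin d → ℝ) : Set (Fin d → ℝ) :=
  {y | ∃ v ∈ S.ctrl, PiecewiseConst v ∧ ∃ t ≥ (0:ℝ), S.φ x v t = y}

/-- the reachable set from `x` up to time `T` -/
def reachLe (S : CAS d m) (T : ℝ) (x : Fin d → ℝ) : Set (Fin d → ℝ) :=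
  {y | ∃ v ∈ S.ctrl, ∃ t ∈ Icc (0:ℝ) T, S.φ x v t = y}

/-- the controllable set to `x` up to time `T` -/
def contrLe (S : CAS d m) (T : ℝ) (x : Fin d → ℝ) : Set (Fin d → ℝ) :=
  {y | ∃ v ∈ S.ctrl, ∃ t ∈ Icc (0:ℝ) T, S.φ y v t = x}

/-- positive invariance of a set -/
def posInv (S : CAS d m) (M : Set (Fin d → ℝ)) : Prop :=
  ∀ x ∈ M, ∀ v ∈ S.ctrl, ∀ t ≥ (0:ℝ), S.φ x v t ∈ M

/-- invariance of a set -/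
def inv (S : CAS d m) (M : Set (Fin d → ℝ)) : Prop :=
  ∀ t ≥ (0:ℝ), {y | ∃ x ∈ M, ∃ v ∈ S.ctrl, S.φ x v t = y} = M

/-- the two defining properties (i) controlled invariance and (ii) approximate
reachability of a control set -/
def controlSetProps (S : CAS d m) (D : Set (Fin d → ℝ)) : Prop :=
  (∀ x ∈ D, ∃ v ∈ S.ctrl, ∀ t ≥ (0:ℝ), S.φ x v t ∈ D) ∧
  (∀ x ∈ D, D ⊆ closure (S.reach x))

/-- a control set: a maximal nonempty set with the properties `controlSetProps` -/
def isControlSet (S : CAS d m) (D : Set (Fin d → ℝ)) : Prop :=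
  D.Nonempty ∧ S.controlSetProps D ∧
  ∀ D', D ⊆ D' → S.controlSetProps D' → D' = D

/-- an invariant control set -/
def isInvControlSet (S : CAS d m) (C : Set (Fin d → ℝ)) : Prop :=
  S.isControlSet C ∧ ∀ x ∈ C, closure C = closure (S.reach x)

/-- local accessibility at a point -/
def locAccAt (S : CAS d m) (x : Fin d → ℝ) : Prop :=
  ∀ T > (0:ℝ), ∀ N ∈ 𝓝 x,
    (interior (S.reachLe T x) ∩ N).Nonempty ∧ (interior (S.contrLe T x) ∩ N).Nonempty

/-- local accessibility on a set -/
def locAccOn (S : CAS d m) (M : Set (Fin d → ℝ)) : Prop :=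
  ∀ x ∈ M, S.locAccAt x

/-- the domain of attraction of a set -/
def domAttr (S : CAS d m) (C : Set (Fin d → ℝ)) : Set (Fin d → ℝ) :=
  {x | (closure (S.reach x) ∩ C).Nonempty}

/-- the strict domain of attraction of an invariant control set -/
def domAttrStrict (S : CAS d m) (C : Set (Fin d → ℝ)) : Set (Fin d → ℝ) :=
  {x | (closure (S.reach x) ∩ C).Nonempty ∧
    ∀ C', S.isInvControlSet C' → (closure (S.reach x) ∩ C').Nonempty → C' = C}

end CAS

namespace CAS

variable {d m : ℕ}

/-- the right hand side of the ODE along a curve `g` with control `u` -/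
def rhs (S : CAS d m) (u : ℝ → Fin m → ℝ) (g : ℝ → Fin d → ℝ) (s : ℝ) : Fin d → ℝ :=
  S.f0 (g s) + ∑ i, u s i • S.f i (g s)

lemma f0_cont (S : CAS d m) : Continuous S.f0 := S.lip0.choose_spec.continuous
lemma f_cont (S : CAS d m) (i : Fin m) : Continuous (S.f i) := (S.lip i).choose_spec.continuous

lemma exists_V_bound (S : CAS d m) : ∃ C : ℝ, 0 ≤ C ∧ ∀ p ∈ S.V, ‖p‖ ≤ C := by
  obtain ⟨C, hC⟩ := S.V_compact.isBounded.exists_norm_le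
  exact ⟨max C 0, le_max_right _ _, fun p hp => (hC p hp).trans (le_max_left _ _)⟩

lemma rhs_measurable (S : CAS d m) {u : ℝ → Fin m → ℝ} {g : ℝ → Fin d → ℝ}
    (hu : Measurable u) (hg : Continuous g) : Measurable (S.rhs u g) := by
  apply Measurable.add
  · exact (S.f0_cont.comp hg).measurable
  · exact Finset.measurable_sum _ fun i _ =>
      ((measurable_pi_apply i).comp hu).smul ((S.f_cont i).comp hg).measurable

lemma rhs_norm_le (S : CAS d m) {C : ℝ} (hC : ∀ p ∈ S.V, ‖p‖ ≤ C)
    {u : ℝ → Fin m → ℝ} (huV : ∀ t, u t ∈ S.V) (g : ℝ → Fin d → ℝ) (s : ℝ) :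
    ‖S.rhs u g s‖ ≤ ‖S.f0 (g s)‖ + C * ∑ i, ‖S.f i (g s)‖ := by
  refine (norm_add_le _ _).trans (add_le_add (le_refl _) ?_)
  refine (norm_sum_le _ _).trans ?_
  rw [Finset.mul_sum]
  refine Finset.sum_le_sum fun i _ => ?_
  rw [norm_smul]
  apply mul_le_mul_of_nonneg_right _ (norm_nonneg _)
  exact (norm_le_pi_norm (u s) i).trans (hC _ (huV s))

lemma rhs_intervalIntegrable (S : CAS d m) {u : ℝ → Fin m → ℝ} {g : ℝ → Fin d → ℝ}
    (hu : Measurable u) (huV : ∀ t, u t ∈ S.V) (hg : Continuous g) (a b : ℝ) :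
    IntervalIntegrable (S.rhs u g) volume a b := by
  obtain ⟨C, hC0, hC⟩ := S.exists_V_bound
  set G : ℝ → ℝ := fun s => ‖S.f0 (g s)‖ + C * ∑ i, ‖S.f i (g s)‖ with hG
  have hGcont : Continuous G := by
    apply Continuous.add
    · exact (S.f0_cont.comp hg).norm
    · exact continuous_const.mul (continuous_finset_sum _ fun i _ => ((S.f_cont i).comp hg).norm)
  obtain ⟨B, hB⟩ := (isCompact_uIcc (a := a) (b := b)).exists_bound_of_continuousOn
    hGcont.continuousOn
  rw [intervalIntegrable_iff]
  have : IsFiniteMeasure (volume.restrict (uIoc a b)) := by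
    constructor
    rw [Measure.restrict_apply_univ]
    exact measure_Ioc_lt_top
  apply MeasureTheory.Integrable.mono' (integrable_const B)
    (S.rhs_measurable hu hg).aestronglyMeasurable.restrict
  refine (ae_restrict_iff' measurableSet_uIoc).2 (Filter.Eventually.of_forall fun s hs => ?_)
  calc ‖S.rhs u g s‖ ≤ G s := S.rhs_norm_le hC huV g s
    _ ≤ ‖G s‖ := le_abs_self _
    _ ≤ B := hB s (uIoc_subset_uIcc hs)


lemma exists_lip (S : CAS d m) : ∃ L : ℝ, 0 ≤ L ∧ ∀ (u : ℝ → Fin m → ℝ), (∀ t, u t ∈ S.V) →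
    ∀ (g h : ℝ → Fin d → ℝ) (s : ℝ),
      ‖S.rhs u g s - S.rhs u h s‖ ≤ L * ‖g s - h s‖ := by
  obtain ⟨C, hC0, hC⟩ := S.exists_V_bound
  obtain ⟨K0, hK0⟩ := S.lip0
  choose K hK using S.lip
  refine ⟨(K0 : ℝ) + C * ∑ i, (K i : ℝ), by positivity, fun u huV g h s => ?_⟩
  have key : S.rhs u g s - S.rhs u h s =
      (S.f0 (g s) - S.f0 (h s)) + ∑ i, u s i • (S.f i (g s) - S.f i (h s)) := by
    simp only [rhs, smul_sub, Finset.sum_sub_distrib]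
    abel
  rw [key]
  refine (norm_add_le _ _).trans ?_
  rw [add_mul]
  gcongr
  · calc ‖S.f0 (g s) - S.f0 (h s)‖ = dist (S.f0 (g s)) (S.f0 (h s)) := (dist_eq_norm _ _).symm
      _ ≤ K0 * dist (g s) (h s) := hK0.dist_le_mul _ _
      _ = (K0 : ℝ) * ‖g s - h s‖ := by rw [dist_eq_norm]
  · calc ‖∑ i, u s i • (S.f i (g s) - S.f i (h s))‖
        ≤ ∑ i, ‖u s i • (S.f i (g s) - S.f i (h s))‖ := norm_sum_le _ _
      _ ≤ ∑ i, C * ((K i : ℝ) * ‖g s - h s‖) := by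
          refine Finset.sum_le_sum fun i _ => ?_
          rw [norm_smul]
          refine mul_le_mul ((norm_le_pi_norm (u s) i).trans (hC _ (huV s))) ?_
            (norm_nonneg _) hC0
          calc ‖S.f i (g s) - S.f i (h s)‖ = dist (S.f i (g s)) (S.f i (h s)) :=
                (dist_eq_norm _ _).symm
              _ ≤ K i * dist (g s) (h s) := (hK i).dist_le_mul _ _
              _ = (K i : ℝ) * ‖g s - h s‖ := by rw [dist_eq_norm]
      _ = C * ∑ i, (K i : ℝ) * ‖g s - h s‖ := by rw [Finset.mul_sum]
      _ = C * (∑ i, (K i : ℝ)) * ‖g s - h s‖ := by rw [mul_assoc, Finset.sum_mul]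


/-- Grönwall-type uniqueness/stability for Carathéodory solutions of the integral equation. -/
lemma key (S : CAS d m) : ∃ L : ℝ, 0 ≤ L ∧ ∀ (u : ℝ → Fin m → ℝ), Measurable u →
    (∀ t, u t ∈ S.V) →
    ∀ (g h : ℝ → Fin d → ℝ), Continuous g → Continuous h →
    ∀ b, 0 ≤ b →
    (∀ r ∈ Icc (0:ℝ) b, g r = g 0 + ∫ s in (0:ℝ)..r, S.rhs u g s) →
    (∀ r ∈ Icc (0:ℝ) b, h r = h 0 + ∫ s in (0:ℝ)..r, S.rhs u h s) →
    ∀ r ∈ Icc (0:ℝ) b, ‖g r - h r‖ ≤ ‖g 0 - h 0‖ * Real.exp (L * r) := by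
  obtain ⟨L, hL0, hLip⟩ := S.exists_lip
  refine ⟨L, hL0, fun u hu huV g h hg hh b hb hgsol hhsol => ?_⟩
  set D : ℝ → ℝ := fun r => ‖g r - h r‖ with hD
  have hDcont : Continuous D := (hg.sub hh).norm
  have hDint : ∀ a c : ℝ, IntervalIntegrable (fun s => L * D s) volume a c :=
    fun a c => (continuous_const.mul hDcont).intervalIntegrable a c
  -- step 1: integral inequality
  have step1 : ∀ r ∈ Icc (0:ℝ) b, D r ≤ D 0 + ∫ s in (0:ℝ)..r, L * D s := by
    intro r hr
    have hsub : g r - h r = (g 0 - h 0) + ∫ s in (0:ℝ)..r, (S.rhs u g s - S.rhs u h s) := by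
      rw [intervalIntegral.integral_sub (S.rhs_intervalIntegrable hu huV hg 0 r)
        (S.rhs_intervalIntegrable hu huV hh 0 r), hgsol r hr, hhsol r hr]
      abel
    have hnn : 0 ≤ ∫ s in (0:ℝ)..r, L * D s :=
      intervalIntegral.integral_nonneg hr.1 fun s _ => mul_nonneg hL0 (norm_nonneg _)
    have hnorm : ‖∫ s in (0:ℝ)..r, (S.rhs u g s - S.rhs u h s)‖ ≤ ∫ s in (0:ℝ)..r, L * D s := by
      have := intervalIntegral.norm_integral_le_abs_of_norm_le
        (Filter.Eventually.of_forall fun s => hLip u huV g h s) (hDint 0 r)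
      rwa [abs_of_nonneg hnn] at this
    calc D r = ‖(g 0 - h 0) + ∫ s in (0:ℝ)..r, (S.rhs u g s - S.rhs u h s)‖ := by show ‖g r - h r‖ = _; rw [hsub]
      _ ≤ ‖g 0 - h 0‖ + ‖∫ s in (0:ℝ)..r, (S.rhs u g s - S.rhs u h s)‖ := norm_add_le _ _
      _ ≤ D 0 + ∫ s in (0:ℝ)..r, L * D s := by
          apply add_le_add _ hnorm
          simp [hD, CAS.φ_init]
  -- step 2: Gronwall
  set F : ℝ → ℝ := fun r => D 0 + ∫ s in (0:ℝ)..r, L * D s with hF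
  have hFderiv : ∀ x : ℝ, HasDerivAt F (L * D x) x := by
    intro x
    have := intervalIntegral.integral_hasDerivAt_right (hDint 0 x)
      ((continuous_const.mul hDcont).stronglyMeasurableAtFilter _ _)
      (continuous_const.mul hDcont).continuousAt
    exact this.const_add _
  have hFcont : Continuous F := by
    rw [continuous_iff_continuousAt]; exact fun x => (hFderiv x).continuousAt
  have hgron := norm_le_gronwallBound_of_norm_deriv_right_le (E := ℝ) (a := 0) (b := b)
    (f := F) (f' := fun x => L * D x) (δ := D 0) (K := L) (ε := 0)
    hFcont.continuousOn (fun x _ => (hFderiv x).hasDerivWithinAt)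
    (by simp [hF, Real.norm_eq_abs, abs_of_nonneg (norm_nonneg _)]; exact (abs_of_nonneg (norm_nonneg (g 0 - h 0))).le)
    (fun x hx => by
      have h1 : D x ≤ F x := step1 x ⟨hx.1, hx.2.le⟩
      have h2 : F x ≤ ‖F x‖ := le_abs_self _
      calc ‖L * D x‖ = L * D x := abs_of_nonneg (mul_nonneg hL0 (norm_nonneg _))
        _ ≤ L * ‖F x‖ + 0 := by
            rw [add_zero]
            exact mul_le_mul_of_nonneg_left (h1.trans h2) hL0)
  intro r hr
  calc D r ≤ F r := step1 r hr
    _ ≤ ‖F r‖ := le_abs_self _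
    _ ≤ gronwallBound (D 0) L 0 (r - 0) := hgron r hr
    _ = ‖g 0 - h 0‖ * Real.exp (L * r) := by rw [sub_zero, gronwallBound_ε0]

/-- uniqueness of solutions with the same control and initial value -/
lemma key_unique (S : CAS d m) (u : ℝ → Fin m → ℝ) (hu : Measurable u)
    (huV : ∀ t, u t ∈ S.V) (g h : ℝ → Fin d → ℝ) (hg : Continuous g) (hh : Continuous h)
    (b : ℝ) (hb : 0 ≤ b)
    (hgsol : ∀ r ∈ Icc (0:ℝ) b, g r = g 0 + ∫ s in (0:ℝ)..r, S.rhs u g s)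
    (hhsol : ∀ r ∈ Icc (0:ℝ) b, h r = h 0 + ∫ s in (0:ℝ)..r, S.rhs u h s)
    (h0 : g 0 = h 0) : ∀ r ∈ Icc (0:ℝ) b, g r = h r := by
  obtain ⟨L, hL0, hkey⟩ := S.key
  intro r hr
  have := hkey u hu huV g h hg hh b hb hgsol hhsol r hr
  rw [h0, sub_self, norm_zero, zero_mul] at this
  exact sub_eq_zero.1 (norm_le_zero_iff.1 this)


/-- the defining equation, in `rhs` form -/
lemma flow_sol (S : CAS d m) {u : ℝ → Fin m → ℝ} (hu : u ∈ S.ctrl) (x : Fin d → ℝ)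
    {r : ℝ} (hr : 0 ≤ r) :
    S.φ x u r = S.φ x u 0 + ∫ s in (0:ℝ)..r, S.rhs u (S.φ x u) s := by
  rw [S.φ_init x u]
  exact S.φ_sol x u hu.1 hu.2 r hr

/-- controls a.e. equal on `(0, b]` give the same solutions on `[0, b]` -/
lemma flow_congr (S : CAS d m) {u u' : ℝ → Fin m → ℝ} (hu : u ∈ S.ctrl) (hu' : u' ∈ S.ctrl)
    (x : Fin d → ℝ) {b : ℝ} (hb : 0 ≤ b)
    (hae : ∀ᵐ s : ℝ, s ∈ Ioc (0:ℝ) b → u s = u' s) :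
    ∀ r ∈ Icc (0:ℝ) b, S.φ x u r = S.φ x u' r := by
  apply S.key_unique u hu.1 hu.2 _ _ (S.φ_cont x u) (S.φ_cont x u') b hb
    (fun r hr => S.flow_sol hu x hr.1)
  · intro r hr
    rw [S.flow_sol hu' x hr.1]
    congr 1
    apply intervalIntegral.integral_congr_ae
    filter_upwards [hae] with s hs hsmem
    have hsmem' : s ∈ Ioc (0:ℝ) b := by
      rw [uIoc_of_le hr.1] at hsmem
      exact ⟨hsmem.1, hsmem.2.trans hr.2⟩
    unfold rhs
    rw [hs hsmem']
  · rw [S.φ_init, S.φ_init]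

/-- the time-shift property of solutions -/
lemma flow_shift (S : CAS d m) {u : ℝ → Fin m → ℝ} (hu : u ∈ S.ctrl) (x : Fin d → ℝ)
    {t : ℝ} (ht : 0 ≤ t) {r : ℝ} (hr : 0 ≤ r) :
    S.φ x u (t + r) = S.φ (S.φ x u t) (fun ρ => u (t + ρ)) r := by
  set u' : ℝ → Fin m → ℝ := fun ρ => u (t + ρ) with hu'def
  have hu' : u' ∈ S.ctrl := ⟨hu.1.comp (measurable_const.add measurable_id), fun ρ => hu.2 _⟩
  set ψ : ℝ → Fin d → ℝ := fun ρ => S.φ x u (t + ρ) with hψdef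
  have hψcont : Continuous ψ := (S.φ_cont x u).comp (continuous_const.add continuous_id)
  have hψ0 : ψ 0 = S.φ x u t := by simp [hψdef]
  have hψsol : ∀ ρ ∈ Icc (0:ℝ) r, ψ ρ = ψ 0 + ∫ s in (0:ℝ)..ρ, S.rhs u' ψ s := by
    intro ρ hρ
    have h1 : S.φ x u (t + ρ) = x + ∫ s in (0:ℝ)..(t + ρ), S.rhs u (S.φ x u) s :=
      S.φ_sol x u hu.1 hu.2 _ (by linarith [hρ.1])
    have h2 : S.φ x u t = x + ∫ s in (0:ℝ)..t, S.rhs u (S.φ x u) s :=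
      S.φ_sol x u hu.1 hu.2 _ ht
    have h3 : (∫ s in (0:ℝ)..t, S.rhs u (S.φ x u) s) + (∫ s in t..(t + ρ), S.rhs u (S.φ x u) s)
        = ∫ s in (0:ℝ)..(t + ρ), S.rhs u (S.φ x u) s :=
      intervalIntegral.integral_add_adjacent_intervals
        (S.rhs_intervalIntegrable hu.1 hu.2 (S.φ_cont x u) 0 t)
        (S.rhs_intervalIntegrable hu.1 hu.2 (S.φ_cont x u) t (t + ρ))
    have h4 : (∫ s in t..(t + ρ), S.rhs u (S.φ x u) s) = ∫ s in (0:ℝ)..ρ, S.rhs u' ψ s := by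
      rw [show (∫ s in (0:ℝ)..ρ, S.rhs u' ψ s) = ∫ s in (0:ℝ)..ρ, S.rhs u (S.φ x u) (t + s) from
        rfl, intervalIntegral.integral_comp_add_left (fun s => S.rhs u (S.φ x u) s) t, add_zero]
    show S.φ x u (t + ρ) = ψ 0 + _
    rw [h1, ← h3, ← h4, hψ0, h2]
    abel
  have := S.key_unique u' hu'.1 hu'.2 ψ (S.φ (S.φ x u t) u') hψcont
    (S.φ_cont _ _) r hr hψsol (fun ρ hρ => S.flow_sol hu' _ hρ.1)
    (by rw [hψ0, S.φ_init])
  exact this r ⟨hr, le_rfl⟩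

/-- concatenation of controls -/
lemma flow_concat (S : CAS d m) {u u' : ℝ → Fin m → ℝ} (hu : u ∈ S.ctrl) (hu' : u' ∈ S.ctrl)
    (w : Fin d → ℝ) {t t' : ℝ} (ht : 0 ≤ t) (ht' : 0 ≤ t') :
    ∃ u'' ∈ S.ctrl, S.φ w u'' (t + t') = S.φ (S.φ w u t) u' t' := by
  set u'' : ℝ → Fin m → ℝ := fun r => if r < t then u r else u' (r - t) with hu''def
  have hu'' : u'' ∈ S.ctrl := by
    constructor
    · exact Measurable.ite measurableSet_Iio hu.1 (hu'.1.comp (measurable_id.sub measurable_const))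
    · intro r
      by_cases h : r < t <;> simp only [hu''def, h, if_true, if_false, reduceIte]
      · exact hu.2 r
      · exact hu'.2 _
  refine ⟨u'', hu'', ?_⟩
  have stepA : S.φ w u'' t = S.φ w u t := by
    have hae : ∀ᵐ s : ℝ, s ∈ Ioc (0:ℝ) t → u'' s = u s := by
      have hsing : ∀ᵐ s : ℝ, s ≠ t := by
        rw [MeasureTheory.ae_iff]
        simpa using measure_singleton (μ := volume) t
      filter_upwards [hsing] with s hs hsmem
      have : s < t := lt_of_le_of_ne hsmem.2 hs
      simp [hu''def, this]
    exact S.flow_congr hu'' hu w ht hae t ⟨ht, le_rfl⟩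
  have stepB : S.φ w u'' (t + t') = S.φ (S.φ w u'' t) (fun ρ => u'' (t + ρ)) t' :=
    S.flow_shift hu'' w ht ht'
  have hshift : (fun ρ => u'' (t + ρ)) ∈ S.ctrl :=
    ⟨hu''.1.comp (measurable_const.add measurable_id), fun ρ => hu''.2 _⟩
  have stepC : S.φ (S.φ w u t) (fun ρ => u'' (t + ρ)) t' = S.φ (S.φ w u t) u' t' := by
    have hae : ∀ᵐ s : ℝ, s ∈ Ioc (0:ℝ) t' → u'' (t + s) = u' s := by
      refine Filter.Eventually.of_forall fun s hs => ?_
      have h1 : ¬ (t + s < t) := by linarith [hs.1]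
      simp [hu''def, h1]
    exact S.flow_congr hshift hu' (S.φ w u t) ht' hae t' ⟨ht', le_rfl⟩
  rw [stepB, stepA, stepC]

/-- Lipschitz dependence on the initial value -/
lemma flow_lip (S : CAS d m) : ∃ L : ℝ, 0 ≤ L ∧ ∀ u ∈ S.ctrl, ∀ t, 0 ≤ t →
    ∀ x y : Fin d → ℝ, ‖S.φ x u t - S.φ y u t‖ ≤ ‖x - y‖ * Real.exp (L * t) := by
  obtain ⟨L, hL0, hkey⟩ := S.key
  refine ⟨L, hL0, fun u hu t ht x y => ?_⟩
  have := hkey u hu.1 hu.2 (S.φ x u) (S.φ y u) (S.φ_cont x u) (S.φ_cont y u) t ht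
    (fun r hr => S.flow_sol hu x hr.1) (fun r hr => S.flow_sol hu y hr.1) t ⟨ht, le_rfl⟩
  rwa [S.φ_init, S.φ_init] at this

end CAS

/-- If `φ(T,x,v) ∈ int 𝒪⁺_{≤T+S}(x)` for some `T, S > 0` and the
system is locally accessible at `φ(T,x,v)`, then `x ∈ int 𝒪⁻_{≤T+2S}(φ(T,x,v))`. -/
theorem stmt5 {d m : ℕ} (S : CAS d m) (x : Fin d → ℝ) (v : ℝ → (Fin m → ℝ))
    (hv : v ∈ S.ctrl) (T s : ℝ) (hT : 0 < T) (hs : 0 < s)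
    (hreach : S.φ x v T ∈ interior (S.reachLe (T + s) x))
    (hacc : S.locAccAt (S.φ x v T)) :
    x ∈ interior (S.contrLe (T + 2 * s) (S.φ x v T)) := by
  obtain ⟨L, hL0, hLip⟩ := S.flow_lip
  set y := S.φ x v T with hy
  have hyN : interior (S.reachLe (T + s) x) ∈ 𝓝 y := isOpen_interior.mem_nhds hreach
  obtain ⟨z, hz1, hz2⟩ := (hacc s hs _ hyN).2
  obtain ⟨u, hu, t, ⟨ht0, htle⟩, hφ⟩ := interior_subset hz2
  -- the map `w ↦ φ w u t` is Lipschitz, hence continuous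
  have hgcont : Continuous (fun w => S.φ w u t) := by
    apply LipschitzWith.continuous (K := (Real.exp (L * t)).toNNReal)
    apply LipschitzWith.of_dist_le_mul
    intro a b
    rw [dist_eq_norm, dist_eq_norm, Real.coe_toNNReal _ (Real.exp_nonneg _), mul_comm]
    exact hLip u hu t ht0 a b
  set W : Set (Fin d → ℝ) := (fun w => S.φ w u t) ⁻¹' (interior (S.contrLe s y)) with hW
  have hWopen : IsOpen W := isOpen_interior.preimage hgcont
  have hxW : x ∈ W := by
    show S.φ x u t ∈ interior (S.contrLe s y)
    rw [hφ]; exact hz1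
  have hWsub : W ⊆ S.contrLe (T + 2 * s) y := by
    intro w hw
    have hw' : S.φ w u t ∈ S.contrLe s y := interior_subset hw
    obtain ⟨u', hu', t', ⟨ht'0, ht'le⟩, hφ'⟩ := hw'
    obtain ⟨u'', hu'', heq⟩ := S.flow_concat hu hu' w ht0 ht'0
    exact ⟨u'', hu'', t + t', ⟨by linarith, by linarith⟩, heq.trans hφ'⟩
  exact mem_interior.2 ⟨W, hWsub, hWopen, hxW⟩
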